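/- Word decomposition of the head-insertion encoding: let a = a_1⋯a_n be a nonempty word of distinct positive integers with i = a_1, and let a^{<i}, a^{>i} be the subwords of entries less than, respectively greater than, i (in their original order). Then, modulo I: if both subwords are nonempty, h(a) =_I (2^i ∘_2 h(a^{>i})) ∘_1 h(a^{<i}); if a^{<i} = ∅, h(a) =_I 2^i ∘_2 h(a^{>i}); if a^{>i} = ∅, h(a) =_I 2^i ∘_1 h(a^{<i}); if a = i, h(a) = 2^i. -/

import Mathlib

/-- Indexed terms of the language `L^I`: generators `2^k` and partial compositions. -/
inductive Trm : Type
  | gen : ℕ → Trm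
  | comp : Trm → ℕ → Trm → Trm
deriving DecidableEq

namespace Trm

/-- Arity `|A|`. -/
def arity : Trm → ℕ
  | gen _ => 2
  | comp A _ B => A.arity + B.arity - 1

/-- Set of indices occurring in a term. -/
def ind : Trm → Finset ℕ
  | gen k => {k}
  | comp A _ B => A.ind ∪ B.ind

/-- Root index. -/
def root : Trm → ℕ
  | gen k => k
  | comp A _ _ => A.root

/-- Number of occurrences of the generator. -/
def countGen : Trm → ℕ
  | gen _ => 1
  | comp A _ B => A.countGen + B.countGen

end Trm

/-- The congruence `=_I` generated by (assoc1) and (assoc2). -/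
inductive IEq : Trm → Trm → Prop
  | refl (A : Trm) : IEq A A
  | symm {A B} : IEq A B → IEq B A
  | trans {A B C} : IEq A B → IEq B C → IEq A C
  | congr {A A' B B'} (n : ℕ) : IEq A A' → IEq B B' →
      IEq (Trm.comp A n B) (Trm.comp A' n B')
  | assoc1 (A B C : Trm) (n m : ℕ) : n ≤ m → m < n + B.arity →
      IEq (Trm.comp (Trm.comp A n B) m C) (Trm.comp A n (Trm.comp B (m - n + 1) C))
  | assoc2 (A B C : Trm) (n m : ℕ) : n + B.arity ≤ m →
      IEq (Trm.comp (Trm.comp A n B) m C) (Trm.comp (Trm.comp A (m - B.arity + 1) C) n B)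

/-- Planar binary trees. -/
inductive BT : Type
  | leaf : BT
  | node : BT → BT → BT
deriving DecidableEq

namespace BT

/-- Number of leaves. -/
def leaves : BT → ℕ
  | leaf => 1
  | node l r => l.leaves + r.leaves

/-- Graft `S` at the `i`-th leaf (1-indexed) of a tree. -/
def graft : BT → ℕ → BT → BT
  | leaf, _, S => S
  | node l r, i, S =>
    if i ≤ l.leaves then node (l.graft i S) r else node l (r.graft (i - l.leaves) S)

end BT

/-- Evaluation `ε` of indexed terms to planar binary trees. -/
def Trm.eval : Trm → BT
  | Trm.gen _ => BT.node BT.leaf BT.leaf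
  | Trm.comp A i B => A.eval.graft i B.eval

/-- `l`-factors. -/
inductive LFactor : Trm → Prop
  | gen (k : ℕ) : LFactor (Trm.gen k)
  | step {A : Trm} (j : ℕ) : LFactor A → j ∉ A.ind →
      LFactor (Trm.comp A ((A.ind.filter (· < j)).card + 1) (Trm.gen j))

/-- Auxiliary for the head-insertion encoding: `done` is the list of already
inserted letters. -/
def hAux : Trm → List ℕ → List ℕ → Trm
  | A, _, [] => A
  | A, done, y :: rest =>
      hAux (Trm.comp A ((done.filter (· < y)).length + 1) (Trm.gen y)) (done ++ [y]) rest

/-- Head-insertion encoding `h` (junk value on the empty word). -/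
def hWord : List ℕ → Trm
  | [] => Trm.gen 0
  | x :: rest => hAux (Trm.gen x) [x] rest

/-- `u_a(x)`: number of letters to the left of `x` in `a` that are greater than `x`. -/
def uCount (a : List ℕ) (x : ℕ) : ℕ := ((a.takeWhile (· ≠ x)).filter (x < ·)).length

/-- Decreasing rearrangement of a word. -/
def sortDesc (a : List ℕ) : List ℕ := (a.mergeSort (· ≤ ·)).reverse

/-- Decreasing encoding `f` (junk value on the empty word). -/
def fWord (a : List ℕ) : Trm :=
  match sortDesc a with
  | [] => Trm.gen 0
  | k :: rest => rest.foldl (fun A x => Trm.comp A (uCount a x + 1) (Trm.gen x)) (Trm.gen k)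

/-- Standardization of a word of distinct integers. -/
def std (a : List ℕ) : List ℕ := a.map (fun x => (a.filter (· ≤ x)).length)

/-- Tonks' vertex map, splitting form `φ`. -/
def tonksPhi (a : List ℕ) : BT :=
  match ha : a.getLast? with
  | none => BT.leaf
  | some x =>
      BT.node (tonksPhi (std (a.filter (· < x)))) (tonksPhi (std (a.filter (x < ·))))
termination_by a.length
decreasing_by
  · have hx : x ∈ a := List.mem_of_mem_getLast? (Option.mem_def.mpr ha)
    have : (a.filter (· < x)).length < a.length := by
      apply List.length_filter_lt_length_iff_exists.2
      exact ⟨x, hx, by simp⟩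
    simp only [std, List.length_map, List.length_unattach]
    exact lt_of_lt_of_eq (List.length_filter_lt_length_iff_exists.2
      ⟨⟨x, hx⟩, List.mem_attach _ _, by simp⟩) List.length_attach
  · have hx : x ∈ a := List.mem_of_mem_getLast? (Option.mem_def.mpr ha)
    have : (a.filter (x < ·)).length < a.length := by
      apply List.length_filter_lt_length_iff_exists.2
      exact ⟨x, hx, by simp⟩
    simp only [std, List.length_map, List.length_unattach]
    exact lt_of_lt_of_eq (List.length_filter_lt_length_iff_exists.2
      ⟨⟨x, hx⟩, List.mem_attach _ _, by simp⟩) List.length_attach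

/-- Tonks' vertex map, head-grafting form `φ̂`. -/
def phiHat : List ℕ → BT
  | [] => BT.leaf
  | x :: rest => (phiHat (std rest)).graft x (BT.node BT.leaf BT.leaf)
termination_by a => a.length
decreasing_by
  simp [std]

/-- The Loday–Ronco map `ψ`. -/
def lodayPsi (a : List ℕ) : BT :=
  match hm : a.maximum with
  | none => BT.leaf
  | some m =>
      let i := a.idxOf m
      BT.node (lodayPsi (std (a.take i))) (lodayPsi (std (a.drop (i + 1))))
termination_by a.length
decreasing_by
  · have hmem : m ∈ a := List.maximum_mem hm
    have hi : a.idxOf m < a.length := List.idxOf_lt_length_iff.2 hmem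
    simp only [std, List.length_map, List.length_take]
    omega
  · have : a ≠ [] := by rintro rfl; simp [List.maximum] at hm
    have : 0 < a.length := List.length_pos_iff.2 this
    simp only [std, List.length_map, List.length_drop]
    omega

/-- Inverse of a permutation word on `{1,…,n}`. -/
def invWord (π : List ℕ) : List ℕ :=
  (List.range π.length).map (fun j => π.idxOf (j + 1) + 1)

/-- One Tamari (right rotation) step, at any subtree. -/
inductive TamariStep : BT → BT → Prop
  | rot (X Y Z : BT) : TamariStep (BT.node (BT.node X Y) Z) (BT.node X (BT.node Y Z))
  | left {l l'} (r : BT) : TamariStep l l' → TamariStep (BT.node l r) (BT.node l' r)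
  | right (l : BT) {r r'} : TamariStep r r' → TamariStep (BT.node l r) (BT.node l r')

/-- The Tamari order. -/
def TamariLE : BT → BT → Prop := Relation.ReflTransGen TamariStep

/-- The strict Tamari order. -/
def TamariLT : BT → BT → Prop := Relation.TransGen TamariStep

/-- One cover of the right weak Bruhat order on words. -/
inductive BruhatStep : List ℕ → List ℕ → Prop
  | swap (α : List ℕ) {u v : ℕ} (β : List ℕ) : u < v →
      BruhatStep (α ++ u :: v :: β) (α ++ v :: u :: β)

/-- The right weak Bruhat order on words. -/
def BruhatLE : List ℕ → List ℕ → Prop := Relation.ReflTransGen BruhatStep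

/-- Head-insertion index `k(a; σ)`. -/
def kIdx (a : ℕ) (σ : List ℕ) : ℕ := 1 + (σ.filter (· < a)).length

section HAuxLemmas

lemma hAux_congr {A A' : Trm} (done rest : List ℕ) (h : IEq A A') :
    IEq (hAux A done rest) (hAux A' done rest) := by
  induction rest generalizing A A' done with
  | nil => exact h
  | cons y rest ih =>
      simp only [hAux]
      exact ih _ (IEq.congr _ h (IEq.refl _))

lemma hAux_perm (A : Trm) {d₁ d₂ : List ℕ} (rest : List ℕ) (h : d₁.Perm d₂) :
    hAux A d₁ rest = hAux A d₂ rest := by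
  induction rest generalizing A d₁ d₂ with
  | nil => rfl
  | cons y rest ih =>
      simp only [hAux]
      rw [(h.filter (· < y)).length_eq]
      exact ih _ (h.append (List.Perm.refl [y]))

lemma arity_hAux (A : Trm) (done rest : List ℕ) :
    (hAux A done rest).arity = A.arity + rest.length := by
  induction rest generalizing A done with
  | nil => rfl
  | cons y rest ih =>
      simp only [hAux, ih, Trm.arity, List.length_cons]
      omega

lemma arity_hWord (s : List ℕ) (hs : s ≠ []) : (hWord s).arity = s.length + 1 := by
  match s with
  | x :: rest => simp [hWord, arity_hAux, Trm.arity]; omega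

lemma hAux_append_singleton (A : Trm) (done l : List ℕ) (y : ℕ) :
    hAux A done (l ++ [y]) =
      Trm.comp (hAux A done l) (((done ++ l).filter (· < y)).length + 1) (Trm.gen y) := by
  induction l generalizing A done with
  | nil => simp [hAux]
  | cons z l ih =>
      simp only [List.cons_append, hAux, List.append_eq]
      rw [ih]
      simp [List.append_assoc]

lemma hWord_append_singleton (s : List ℕ) (hs : s ≠ []) (y : ℕ) :
    hWord (s ++ [y]) = Trm.comp (hWord s) ((s.filter (· < y)).length + 1) (Trm.gen y) := by
  match s with
  | x :: rest =>
      simp only [List.cons_append, hWord, hAux_append_singleton]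
      rfl

lemma assoc1' (A B C : Trm) {n m : ℕ} (m' : ℕ) (h1 : n ≤ m) (h2 : m < n + B.arity)
    (hm : m - n + 1 = m') :
    IEq (Trm.comp (Trm.comp A n B) m C) (Trm.comp A n (Trm.comp B m' C)) := by
  subst hm; exact IEq.assoc1 A B C n m h1 h2

lemma assoc2' (A B C : Trm) {n m : ℕ} (m' : ℕ) (h1 : n + B.arity ≤ m)
    (hm : m - B.arity + 1 = m') :
    IEq (Trm.comp (Trm.comp A n B) m C) (Trm.comp (Trm.comp A m' C) n B) := by
  subst hm; exact IEq.assoc2 A B C n m h1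

/-- Combined shape term. -/
def Tcomb (i : ℕ) : List ℕ → List ℕ → Trm
  | [], [] => Trm.gen i
  | [], b => Trm.comp (Trm.gen i) 2 (hWord b)
  | s, [] => Trm.comp (Trm.gen i) 1 (hWord s)
  | s, b => Trm.comp (Trm.comp (Trm.gen i) 2 (hWord b)) 1 (hWord s)

lemma Tcomb_step (i y : ℕ) (s b : List ℕ) (hs : ∀ x ∈ s, x < i) (hb : ∀ x ∈ b, i < x)
    (hy : y ≠ i) :
    IEq (Trm.comp (Tcomb i s b) (((i :: (s ++ b)).filter (· < y)).length + 1) (Trm.gen y))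
      (if y < i then Tcomb i (s ++ [y]) b else Tcomb i s (b ++ [y])) := by
  rcases lt_or_gt_of_ne hy with hyi | hyi
  · -- y < i
    have hk : ((i :: (s ++ b)).filter (· < y)).length = (s.filter (· < y)).length := by
      have hbnil : b.filter (· < y) = [] := by
        rw [List.filter_eq_nil_iff]
        intro x hx
        simp only [decide_eq_true_eq]
        have := hb x hx; omega
      simp [List.filter_cons, List.filter_append, hbnil, show ¬ i < y by omega]
    rw [if_pos hyi, hk]
    match s, b with
    | [], [] => exact IEq.refl _
    | [], b₀ :: b' => exact IEq.refl _
    | x :: s', [] =>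
        have hp : ((x :: s').filter (· < y)).length ≤ s'.length + 1 := by
          simpa using List.length_filter_le (fun z => decide (z < y)) (x :: s')
        rw [show Tcomb i (x :: s') [] = Trm.comp (Trm.gen i) 1 (hWord (x :: s')) from rfl,
          show Tcomb i ((x :: s') ++ [y]) [] =
            Trm.comp (Trm.gen i) 1 (hWord ((x :: s') ++ [y])) from rfl,
          hWord_append_singleton (x :: s') (by simp) y]
        exact assoc1' (Trm.gen i) (hWord (x :: s')) (Trm.gen y)
          (((x :: s').filter (· < y)).length + 1) (by omega)
          (by rw [arity_hWord _ (by simp)]; simp only [List.length_cons]; omega)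
          (by omega)
    | x :: s', b₀ :: b' =>
        have hp : ((x :: s').filter (· < y)).length ≤ s'.length + 1 := by
          simpa using List.length_filter_le (fun z => decide (z < y)) (x :: s')
        rw [show Tcomb i (x :: s') (b₀ :: b') =
            Trm.comp (Trm.comp (Trm.gen i) 2 (hWord (b₀ :: b'))) 1 (hWord (x :: s')) from rfl,
          show Tcomb i ((x :: s') ++ [y]) (b₀ :: b') =
            Trm.comp (Trm.comp (Trm.gen i) 2 (hWord (b₀ :: b'))) 1
              (hWord ((x :: s') ++ [y])) from rfl,
          hWord_append_singleton (x :: s') (by simp) y]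
        exact assoc1' (Trm.comp (Trm.gen i) 2 (hWord (b₀ :: b'))) (hWord (x :: s'))
          (Trm.gen y) (((x :: s').filter (· < y)).length + 1) (by omega)
          (by rw [arity_hWord _ (by simp)]; simp only [List.length_cons]; omega)
          (by omega)
  · -- i < y
    have hk : ((i :: (s ++ b)).filter (· < y)).length
        = s.length + (b.filter (· < y)).length + 1 := by
      have hsfull : s.filter (· < y) = s := by
        rw [List.filter_eq_self]
        intro x hx
        simp only [decide_eq_true_eq]
        have := hs x hx; omega
      simp [List.filter_cons, List.filter_append, hsfull, hyi]
    rw [if_neg (by omega), hk]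
    match s, b with
    | [], [] => exact IEq.refl _
    | [], b₀ :: b' =>
        have hp : ((b₀ :: b').filter (· < y)).length ≤ b'.length + 1 := by
          simpa using List.length_filter_le (fun z => decide (z < y)) (b₀ :: b')
        rw [show Tcomb i [] (b₀ :: b') = Trm.comp (Trm.gen i) 2 (hWord (b₀ :: b')) from rfl,
          show Tcomb i [] ((b₀ :: b') ++ [y]) =
            Trm.comp (Trm.gen i) 2 (hWord ((b₀ :: b') ++ [y])) from rfl,
          hWord_append_singleton (b₀ :: b') (by simp) y]
        simp only [List.length_nil, Nat.zero_add]
        exact assoc1' (Trm.gen i) (hWord (b₀ :: b')) (Trm.gen y)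
          (((b₀ :: b').filter (· < y)).length + 1) (by omega)
          (by rw [arity_hWord _ (by simp)]; simp only [List.length_cons]; omega)
          (by omega)
    | x :: s', [] =>
        rw [show Tcomb i (x :: s') [] = Trm.comp (Trm.gen i) 1 (hWord (x :: s')) from rfl]
        refine IEq.trans (assoc2' (Trm.gen i) (hWord (x :: s')) (Trm.gen y) 2
          (by rw [arity_hWord _ (by simp)]; simp only [List.length_cons, List.filter_nil,
            List.length_nil]; omega)
          (by rw [arity_hWord _ (by simp)]; simp only [List.length_cons, List.filter_nil,
            List.length_nil]; omega)) ?_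
        exact IEq.refl _
    | x :: s', b₀ :: b' =>
        have hp : ((b₀ :: b').filter (· < y)).length ≤ b'.length + 1 := by
          simpa using List.length_filter_le (fun z => decide (z < y)) (b₀ :: b')
        rw [show Tcomb i (x :: s') (b₀ :: b') =
            Trm.comp (Trm.comp (Trm.gen i) 2 (hWord (b₀ :: b'))) 1 (hWord (x :: s')) from rfl,
          show Tcomb i (x :: s') ((b₀ :: b') ++ [y]) =
            Trm.comp (Trm.comp (Trm.gen i) 2 (hWord ((b₀ :: b') ++ [y]))) 1
              (hWord (x :: s')) from rfl,
          hWord_append_singleton (b₀ :: b') (by simp) y]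
        refine IEq.trans (assoc2' (Trm.comp (Trm.gen i) 2 (hWord (b₀ :: b')))
          (hWord (x :: s')) (Trm.gen y) (((b₀ :: b').filter (· < y)).length + 2)
          (by rw [arity_hWord _ (by simp)]; simp only [List.length_cons]; omega)
          (by rw [arity_hWord _ (by simp)]; simp only [List.length_cons]; omega)) ?_
        refine IEq.congr 1 ?_ (IEq.refl _)
        exact assoc1' (Trm.gen i) (hWord (b₀ :: b')) (Trm.gen y)
          (((b₀ :: b').filter (· < y)).length + 1) (by omega)
          (by rw [arity_hWord _ (by simp)]; simp only [List.length_cons]; omega)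
          (by omega)

lemma hAux_main (i : ℕ) (rest : List ℕ) : ∀ s b : List ℕ, (∀ x ∈ s, x < i) →
    (∀ x ∈ b, i < x) → (∀ y ∈ rest, y ≠ i) →
    IEq (hAux (Tcomb i s b) (i :: (s ++ b)) rest)
      (Tcomb i (s ++ rest.filter (· < i)) (b ++ rest.filter (i < ·))) := by
  induction rest with
  | nil => intro s b _ _ _; simp only [hAux, List.filter_nil, List.append_nil]; exact IEq.refl _
  | cons y rest ih =>
      intro s b hs hb hrest
      have hy : y ≠ i := hrest y (by simp)
      have hrest' : ∀ z ∈ rest, z ≠ i := fun z hz => hrest z (by simp [hz])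
      simp only [hAux]
      have hstep := Tcomb_step i y s b hs hb hy
      rcases lt_or_gt_of_ne hy with hyi | hyi
      · rw [if_pos hyi] at hstep
        have hperm : ((i :: (s ++ b)) ++ [y]).Perm (i :: ((s ++ [y]) ++ b)) := by
          simp only [List.cons_append, List.append_assoc]
          exact List.Perm.cons _ (List.Perm.append_left s List.perm_append_comm)
        rw [hAux_perm _ rest hperm]
        refine IEq.trans (hAux_congr _ rest hstep) ?_
        have hs' : ∀ x ∈ s ++ [y], x < i := by
          intro x hx
          rcases List.mem_append.1 hx with h | h
          · exact hs x h
          · simp at h; omega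
        have := ih (s ++ [y]) b hs' hb hrest'
        simpa [List.filter_cons, hyi, show ¬ i < y by omega, List.append_assoc] using this
      · rw [if_neg (by omega)] at hstep
        have hdone : (i :: (s ++ b)) ++ [y] = i :: (s ++ (b ++ [y])) := by
          simp [List.append_assoc]
        rw [hdone]
        refine IEq.trans (hAux_congr _ rest hstep) ?_
        have hb' : ∀ x ∈ b ++ [y], i < x := by
          intro x hx
          rcases List.mem_append.1 hx with h | h
          · exact hb x h
          · simp at h; omega
        have := ih s (b ++ [y]) hs hb' hrest'
        simpa [List.filter_cons, hyi, show ¬ y < i by omega, List.append_assoc] using this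

end HAuxLemmas
theorem hWord_decomposition (a : List ℕ) (ha : a ≠ []) (hnd : a.Nodup)
    (hpos : ∀ x ∈ a, 0 < x) (i : ℕ) (hi : i = a.head ha) :
    (a.filter (· < i) ≠ [] → a.filter (i < ·) ≠ [] →
        IEq (hWord a)
          (Trm.comp (Trm.comp (Trm.gen i) 2 (hWord (a.filter (i < ·)))) 1
            (hWord (a.filter (· < i))))) ∧
    (a.filter (· < i) = [] → a.filter (i < ·) ≠ [] →
        IEq (hWord a) (Trm.comp (Trm.gen i) 2 (hWord (a.filter (i < ·))))) ∧
    (a.filter (i < ·) = [] → a.filter (· < i) ≠ [] →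
        IEq (hWord a) (Trm.comp (Trm.gen i) 1 (hWord (a.filter (· < i))))) ∧
    (a = [i] → hWord a = Trm.gen i) := by
  cases a with
  | nil => exact absurd rfl ha
  | cons x rest =>
    have hix : i = x := by simpa using hi
    subst hix
    have hne : ∀ y ∈ rest, y ≠ i := by
      intro y hy h
      exact (List.nodup_cons.1 hnd).1 (h ▸ hy)
    have hmain := hAux_main i rest [] [] (by simp) (by simp) hne
    simp only [List.nil_append, List.append_nil] at hmain
    have hfl : (i :: rest).filter (· < i) = rest.filter (· < i) := by simp
    have hfg : (i :: rest).filter (i < ·) = rest.filter (i < ·) := by simp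
    refine ⟨?_, ?_, ?_, ?_⟩
    · intro h1 h2
      rw [hfl] at h1 ⊢
      rw [hfg] at h2 ⊢
      obtain ⟨s0, s', hsx⟩ := List.exists_cons_of_ne_nil h1
      obtain ⟨b0, b', hbx⟩ := List.exists_cons_of_ne_nil h2
      rw [hsx, hbx] at hmain ⊢
      exact hmain
    · intro h1 h2
      rw [hfl] at h1
      rw [hfg] at h2 ⊢
      obtain ⟨b0, b', hbx⟩ := List.exists_cons_of_ne_nil h2
      rw [h1, hbx] at hmain
      rw [hbx]
      exact hmain
    · intro h1 h2
      rw [hfg] at h1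
      rw [hfl] at h2 ⊢
      obtain ⟨s0, s', hsx⟩ := List.exists_cons_of_ne_nil h2
      rw [h1, hsx] at hmain
      rw [hsx]
      exact hmain
    · intro h
      have : rest = [] := by simpa using h
      subst this
      rfl
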